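/- In the general Kuroda-type setup, if $\det T_{n-1} \neq 0$, then $K(\pi) \cap K[X_1^{\pm 1}, \ldots, X_n^{\pm 1}] = K[\pi]$, where $K(\pi)$ is the field of fractions of $K[\pi] = K[\pi_1, \ldots, \pi_{n-1}]$; that is, every Laurent polynomial expressible as a fraction of two elements of $K[\pi_1, \ldots, \pi_{n-1}]$ already lies in $K[\pi_1, \ldots, \pi_{n-1}]$. -/

import Mathlib

set_option linter.unusedSectionVars false
set_option linter.unusedVariables false
set_option maxHeartbeats 1000000


/-- The general Kuroda-type element
`π i = Xₙ^(γ i) − X₁^(T i 1) ⋯ X_{n-1}^(T i (n-1)) · Xₙ^(β i)`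
in the Laurent polynomial ring in `n + 1` variables, realized as the group algebra
`K[ℤ^(n+1)]`.  Here `T i` is the `i`-th row of the matrix `T_{n-1}` (whose diagonal
entries are `-α i i` and off-diagonal entries `α i j`), and `β i = α i n ≥ 0`. -/
noncomputable def kurodaPi (K : Type*) [Field K] (n : ℕ)
    (T : Matrix (Fin n) (Fin n) ℤ) (β γ : Fin n → ℤ) (i : Fin n) :
    AddMonoidAlgebra K (Fin (n + 1) → ℤ) :=
  AddMonoidAlgebra.single (Fin.snoc (0 : Fin n → ℤ) (γ i)) 1 -
    AddMonoidAlgebra.single (Fin.snoc (T i) (β i)) 1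

namespace KurodaAux

open AddMonoidAlgebra

section Torus

variable {L : Type*} [Field L] {m : ℕ}

noncomputable def torusChar (ξ : Fin m → Lˣ) : Multiplicative (Fin m → ℤ) →* L where
  toFun v := ((∏ j, ξ j ^ (Multiplicative.toAdd v j) : Lˣ) : L)
  map_one' := by simp
  map_mul' v w := by
    push_cast [← Units.val_mul, ← Finset.prod_mul_distrib]
    refine congrArg _ (funext fun j => ?_)
    show (ξ j : L) ^ (Multiplicative.toAdd v j + Multiplicative.toAdd w j) = _
    rw [zpow_add₀ (ξ j).ne_zero]

noncomputable def torusEval (ξ : Fin m → Lˣ) : AddMonoidAlgebra L (Fin m → ℤ) →ₐ[L] L :=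
  AddMonoidAlgebra.lift L L (Fin m → ℤ) (torusChar ξ)

lemma torusEval_single (ξ : Fin m → Lˣ) (v : Fin m → ℤ) (c : L) :
    torusEval ξ (AddMonoidAlgebra.single v c) = c * ((∏ j, ξ j ^ (v j) : Lˣ) : L) := by
  rw [torusEval, AddMonoidAlgebra.lift_single]
  simp only [torusChar, MonoidHom.coe_mk, OneHom.coe_mk, smul_eq_mul]
  rfl

lemma prod_zpow_units {ι : Type*} (s : Finset ι) (f : ι → Lˣ) (k : ℤ) :
    (∏ j ∈ s, f j) ^ k = ∏ j ∈ s, f j ^ k :=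
  map_prod (zpowGroupHom k : Lˣ →* Lˣ) f s

lemma zpow_finset_sum {ι : Type*} (s : Finset ι) (w : Lˣ) (g : ι → ℤ) :
    w ^ (∑ j ∈ s, g j) = ∏ j ∈ s, w ^ g j := by
  classical
  induction s using Finset.induction_on with
  | empty => simp
  | insert a s hj ih => rw [Finset.sum_insert hj, Finset.prod_insert hj, zpow_add, ih]

lemma exists_zpow_eq [IsAlgClosed L] (d : ℤ) (hd : d ≠ 0) (a : Lˣ) : ∃ w : Lˣ, w ^ d = a := by
  have key : ∀ (b : Lˣ) (k : ℤ), 0 < k → ∃ w : Lˣ, w ^ k = b := by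
    intro b k hk
    obtain ⟨z, hz⟩ := IsAlgClosed.exists_pow_nat_eq (b : L) (n := k.toNat) (by omega)
    have hz0 : z ≠ 0 := by
      intro h
      rw [h, zero_pow (by omega)] at hz
      exact b.ne_zero hz.symm
    refine ⟨Units.mk0 z hz0, Units.ext ?_⟩
    rw [Units.val_zpow_eq_zpow_val, ← Int.toNat_of_nonneg hk.le, zpow_natCast, Units.val_mk0, hz]
  rcases hd.lt_or_gt with h | h
  · obtain ⟨w, hw⟩ := key a (-d) (by omega)
    exact ⟨w⁻¹, by rw [inv_zpow, ← zpow_neg, hw]⟩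
  · exact key a d h

lemma exists_torus_solution [IsAlgClosed L] {n : ℕ} (T : Matrix (Fin n) (Fin n) ℤ)
    (hdet : T.det ≠ 0) (e : Fin n → Lˣ) :
    ∃ u : Fin n → Lˣ, ∀ i, (∏ k, u k ^ (T i k)) = e i := by
  choose w hw using fun i => exists_zpow_eq T.det hdet (e i)
  refine ⟨fun k => ∏ j, w j ^ (T.adjugate k j), fun i => ?_⟩
  have hentry : ∀ j, (∑ k, T i k * T.adjugate k j) = if i = j then T.det else 0 := by
    intro j
    have h' : (T * T.adjugate) i j = (T.det • (1 : Matrix (Fin n) (Fin n) ℤ)) i j := by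
      rw [Matrix.mul_adjugate]
    rw [Matrix.mul_apply] at h'
    simpa [Matrix.smul_apply, Matrix.one_apply, mul_ite] using h'
  calc (∏ k, (∏ j, w j ^ (T.adjugate k j)) ^ (T i k))
      = ∏ k, ∏ j, w j ^ (T.adjugate k j * T i k) := by
        refine Finset.prod_congr rfl fun k _ => ?_
        rw [prod_zpow_units]
        exact Finset.prod_congr rfl fun j _ => by rw [← zpow_mul]
    _ = ∏ j, w j ^ (∑ k, T i k * T.adjugate k j) := by
        rw [Finset.prod_comm]
        refine Finset.prod_congr rfl fun j _ => ?_
        rw [zpow_finset_sum]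
        exact Finset.prod_congr rfl fun k _ => by rw [mul_comm]
    _ = ∏ j, if i = j then w j ^ T.det else 1 := by
        refine Finset.prod_congr rfl fun j _ => ?_
        rw [hentry]
        split <;> simp
    _ = w i ^ T.det := by rw [Finset.prod_ite_eq]; simp
    _ = e i := hw i

lemma snoc_prod (u : Fin m → Lˣ) (t : Lˣ) (v : Fin m → ℤ) (z : ℤ) :
    (∏ j : Fin (m+1), (Fin.snoc u t : Fin (m+1) → Lˣ) j ^ ((Fin.snoc v z : Fin (m+1) → ℤ) j))
      = (∏ j : Fin m, u j ^ v j) * t ^ z := by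
  rw [Fin.prod_univ_castSucc]
  simp [Fin.snoc_castSucc, Fin.snoc_last]

/-- There is a torus point where `π` takes any prescribed value `c`. -/
lemma exists_kuroda_point [IsAlgClosed L] {n : ℕ} (T : Matrix (Fin n) (Fin n) ℤ)
    (β γ : Fin n → ℤ) (hγ : ∀ i, 1 ≤ γ i) (hdet : T.det ≠ 0) (c : Fin n → L) :
    ∃ ξ : Fin (n+1) → Lˣ, ∀ i, torusEval ξ (kurodaPi L n T β γ i) = c i := by
  classical
  obtain ⟨t, ht⟩ : ∃ t : L, t ≠ 0 ∧ ∀ i, t ^ (γ i).toNat ≠ c i := by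
    have hfin : (Set.Finite ({(0:L)} ∪
        ⋃ i, {x : L | (Polynomial.X ^ (γ i).toNat - Polynomial.C (c i)).IsRoot x})) := by
      refine (Set.finite_singleton 0).union (Set.finite_iUnion fun i => ?_)
      exact Polynomial.finite_setOf_isRoot
        (Polynomial.X_pow_sub_C_ne_zero (by have := hγ i; omega) (c i))
    obtain ⟨t, ht⟩ := (hfin.infinite_compl (α := L)).nonempty
    refine ⟨t, ?_, fun i => ?_⟩
    · intro h; exact ht (Or.inl (by simp [h]))
    · intro h
      exact ht (Or.inr (Set.mem_iUnion.mpr ⟨i, by simp [Polynomial.IsRoot, h]⟩))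
  set tu : Lˣ := Units.mk0 t ht.1 with htu
  have hval : ∀ i, ((tu ^ (γ i) : Lˣ) : L) = t ^ (γ i).toNat := by
    intro i
    rw [Units.val_zpow_eq_zpow_val, htu, Units.val_mk0]
    conv_lhs => rw [← Int.toNat_of_nonneg (by have := hγ i; omega : (0:ℤ) ≤ γ i), zpow_natCast]
  have hd : ∀ i, t ^ (γ i).toNat - c i ≠ 0 := fun i => sub_ne_zero.mpr (ht.2 i)
  obtain ⟨u, hu⟩ := exists_torus_solution T hdet
    (fun i => Units.mk0 (t ^ (γ i).toNat - c i) (hd i) * tu ^ (-β i))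
  refine ⟨Fin.snoc u tu, fun i => ?_⟩
  rw [kurodaPi, map_sub, torusEval_single, torusEval_single, one_mul, one_mul,
    snoc_prod, snoc_prod, hu i]
  have h0 : (∏ j : Fin n, u j ^ ((0 : Fin n → ℤ) j)) = 1 := by simp
  rw [h0, one_mul]
  have hb : Units.mk0 (t ^ (γ i).toNat - c i) (hd i) * tu ^ (-β i) * tu ^ (β i)
      = Units.mk0 (t ^ (γ i).toNat - c i) (hd i) := by
    rw [mul_assoc, ← zpow_add, neg_add_cancel, zpow_zero, mul_one]
  rw [hb, hval i, Units.val_mk0]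
  ring

end Torus

section Main

open MvPolynomial

variable {L : Type*} [Field L] [IsAlgClosed L] {n : ℕ}
  {T : Matrix (Fin n) (Fin n) ℤ} {β γ : Fin n → ℤ}

/-- The main induction: over an algebraically closed field. -/
lemma main_aux (hγ : ∀ i, 1 ≤ γ i) (hdet : T.det ≠ 0)
    (Q : MvPolynomial (Fin n) L) :
    ∀ (x : AddMonoidAlgebra L (Fin (n+1) → ℤ)) (P : MvPolynomial (Fin n) L),
      aeval (kurodaPi L n T β γ) Q ≠ 0 →
      x * aeval (kurodaPi L n T β γ) Q = aeval (kurodaPi L n T β γ) P →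
      x ∈ Algebra.adjoin L (Set.range (kurodaPi L n T β γ)) := by
  induction Q using WellFounded.induction (r := DvdNotUnit)
      (wellFounded_dvdNotUnit (α := MvPolynomial (Fin n) L)) with
  | _ Q IH =>
  intro x P hQ0 heq
  set π := kurodaPi L n T β γ with hπ
  by_cases hunit : IsUnit Q
  · obtain ⟨u, rfl⟩ := hunit
    rw [Algebra.adjoin_range_eq_range_aeval]
    refine ⟨P * ((u⁻¹ : (MvPolynomial (Fin n) L)ˣ) : MvPolynomial (Fin n) L), ?_⟩
    have h1 : aeval π ((u : MvPolynomial (Fin n) L) * ((u⁻¹ : (MvPolynomial (Fin n) L)ˣ) :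
        MvPolynomial (Fin n) L)) = 1 := by
      rw [u.mul_inv]; exact map_one _
    calc aeval π (P * ((u⁻¹ : (MvPolynomial (Fin n) L)ˣ) : MvPolynomial (Fin n) L))
        = (x * aeval π (u : MvPolynomial (Fin n) L)) *
            aeval π ((u⁻¹ : (MvPolynomial (Fin n) L)ˣ) : MvPolynomial (Fin n) L) := by
          rw [heq, map_mul]
      _ = x * aeval π ((u : MvPolynomial (Fin n) L) *
            ((u⁻¹ : (MvPolynomial (Fin n) L)ˣ) : MvPolynomial (Fin n) L)) := by
          rw [map_mul]; ring
      _ = x := by rw [h1, mul_one]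
  · have hQne : Q ≠ 0 := fun h => hQ0 (by rw [h, map_zero])
    obtain ⟨q₀, hq₀, Q', rfl⟩ : ∃ q₀, Irreducible q₀ ∧ ∃ Q', Q = q₀ * Q' := by
      obtain ⟨q₀, hirr, hdvd⟩ := WfDvdMonoid.exists_irreducible_factor hunit hQne
      exact ⟨q₀, hirr, hdvd⟩
    have hq₀ne : aeval π q₀ ≠ 0 := fun h => hQ0 (by rw [map_mul, h, zero_mul])
    have hQ'ne : aeval π Q' ≠ 0 := fun h => hQ0 (by rw [map_mul, h, mul_zero])
    by_cases hdvd : q₀ ∣ P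
    · obtain ⟨P', rfl⟩ := hdvd
      have hcancel : aeval π q₀ * (x * aeval π Q' - aeval π P') = 0 := by
        rw [map_mul, map_mul] at heq
        ring_nf
        ring_nf at heq
        linear_combination heq
      have : x * aeval π Q' = aeval π P' := by
        rcases mul_eq_zero.mp hcancel with h | h
        · exact absurd h hq₀ne
        · exact sub_eq_zero.mp h
      exact IH Q' ⟨fun h => hQ'ne (by rw [h, map_zero]), q₀, hq₀.not_isUnit, mul_comm q₀ Q'⟩
        x P' (by exact hQ'ne) this
    · exfalso
      -- q₀ is prime
      have hprime : Prime q₀ := hq₀.prime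
      -- find a point where q₀ vanishes but P does not
      obtain ⟨c, hc0, hcP⟩ : ∃ c : Fin n → L, eval c q₀ = 0 ∧ eval c P ≠ 0 := by
        by_contra hno
        push_neg at hno
        have hmem : P ∈ MvPolynomial.vanishingIdeal L
            (MvPolynomial.zeroLocus L (Ideal.span {q₀})) := by
          rw [MvPolynomial.mem_vanishingIdeal_iff]
          intro z hz
          rw [MvPolynomial.mem_zeroLocus_iff] at hz
          simpa [MvPolynomial.coe_aeval_eq_eval] using
              hno z (by simpa [MvPolynomial.coe_aeval_eq_eval] using hz q₀ (Ideal.subset_span rfl))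
        rw [MvPolynomial.vanishingIdeal_zeroLocus_eq_radical] at hmem
        have hpr : (Ideal.span {q₀}).IsPrime :=
          (Ideal.span_singleton_prime hprime.ne_zero).mpr hprime
        rw [hpr.radical, Ideal.mem_span_singleton] at hmem
        exact hdvd hmem
      obtain ⟨ξ, hξ⟩ := exists_kuroda_point T β γ hγ hdet c
      have happ := congrArg (torusEval ξ) heq
      rw [map_mul] at happ
      have hcomp : ∀ (F : MvPolynomial (Fin n) L), torusEval ξ (aeval π F) = eval c F := by
        intro F
        rw [MvPolynomial.comp_aeval_apply]
        have hfc : (fun i => torusEval ξ (π i)) = c := funext hξ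
        rw [hfc]
        exact RingHom.congr_fun (MvPolynomial.coe_aeval_eq_eval c) F
      have hQeval : torusEval ξ (aeval π (q₀ * Q')) = 0 := by
        rw [hcomp, map_mul, hc0, zero_mul]
      have hPeval : torusEval ξ (aeval π P) ≠ 0 := by
        rw [hcomp]; exact hcP
      rw [hQeval, mul_zero] at happ
      exact hPeval happ.symm

end Main

section BaseChange

open AddMonoidAlgebra

variable {K L : Type*} [Field K] [Field L] (ρ : K →+* L) {G : Type*} [AddCommMonoid G]

/-- Coefficientwise base change of group algebras. -/
noncomputable def baseMap : AddMonoidAlgebra K G →+* AddMonoidAlgebra L G :=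
  AddMonoidAlgebra.liftNCRingHom (AddMonoidAlgebra.singleZeroRingHom.comp ρ)
    (AddMonoidAlgebra.of L G) (fun _ _ => Commute.all _ _)

lemma baseMap_single (v : G) (c : K) :
    baseMap ρ (AddMonoidAlgebra.single v c) = AddMonoidAlgebra.single v (ρ c) := by
  show AddMonoidAlgebra.liftNC _ _ (AddMonoidAlgebra.single v c) = _
  rw [AddMonoidAlgebra.liftNC_single]
  show AddMonoidAlgebra.single 0 (ρ c) * AddMonoidAlgebra.single v 1 = _
  rw [AddMonoidAlgebra.single_mul_single, zero_add, mul_one]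

lemma baseMap_eq_mapRange (f : AddMonoidAlgebra K G) :
    baseMap ρ f = AddMonoidAlgebra.ofCoeff (Finsupp.mapRange ρ ρ.map_zero f.coeff) := by
  induction f using AddMonoidAlgebra.induction_linear with
  | zero => simp
  | add a b ha hb => rw [map_add, ha, hb, AddMonoidAlgebra.coeff_add, Finsupp.mapRange_add ρ.map_add, AddMonoidAlgebra.ofCoeff_add]
  | single v c => rw [AddMonoidAlgebra.coeff_single, Finsupp.mapRange_single, AddMonoidAlgebra.ofCoeff_single]; exact baseMap_single ρ v c

lemma baseMap_injective (hρ : Function.Injective ρ) :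
    Function.Injective (baseMap ρ (G := G)) := by
  intro a b hab
  rw [baseMap_eq_mapRange, baseMap_eq_mapRange] at hab
  exact AddMonoidAlgebra.coeff_injective (Finsupp.mapRange_injective ρ ρ.map_zero hρ (AddMonoidAlgebra.ofCoeff_injective hab))

end BaseChange

section Glue

open AddMonoidAlgebra MvPolynomial

variable {K L : Type*} [Field K] [Field L] [Algebra K L] {n : ℕ}
  {T : Matrix (Fin n) (Fin n) ℤ} {β γ : Fin n → ℤ}

lemma baseMap_kurodaPi (i : Fin n) :
    baseMap (algebraMap K L) (kurodaPi K n T β γ i) = kurodaPi L n T β γ i := by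
  rw [kurodaPi, map_sub, baseMap_single, baseMap_single, map_one, kurodaPi]

lemma baseMap_aeval (F : MvPolynomial (Fin n) K) :
    baseMap (algebraMap K L) (aeval (kurodaPi K n T β γ) F)
      = aeval (kurodaPi L n T β γ) (MvPolynomial.map (algebraMap K L) F) := by
  induction F using MvPolynomial.induction_on with
  | C a =>
      rw [MvPolynomial.map_C, MvPolynomial.aeval_C, MvPolynomial.aeval_C]
      have h1 : (algebraMap K (AddMonoidAlgebra K (Fin (n+1) → ℤ))) a
          = AddMonoidAlgebra.single 0 a := by
        rw [AddMonoidAlgebra.coe_algebraMap]; simp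
      have h2 : (algebraMap L (AddMonoidAlgebra L (Fin (n+1) → ℤ))) (algebraMap K L a)
          = AddMonoidAlgebra.single 0 (algebraMap K L a) := by
        rw [AddMonoidAlgebra.coe_algebraMap]; simp
      rw [h1, h2, baseMap_single]
  | add p q hp hq => rw [map_add, map_add, map_add, hp, hq, map_add]
  | mul_X p i hp =>
      rw [map_mul, map_mul, MvPolynomial.aeval_X, hp, baseMap_kurodaPi,
        show (MvPolynomial.map (algebraMap K L)) (p * MvPolynomial.X i)
            = (MvPolynomial.map (algebraMap K L)) p *
              (MvPolynomial.map (algebraMap K L)) (MvPolynomial.X i) from map_mul _ _ _,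
        MvPolynomial.map_X, map_mul, MvPolynomial.aeval_X]

lemma descent (x : AddMonoidAlgebra K (Fin (n+1) → ℤ))
    (hx : baseMap (algebraMap K L) x ∈ Algebra.adjoin L (Set.range (kurodaPi L n T β γ))) :
    x ∈ Algebra.adjoin K (Set.range (kurodaPi K n T β γ)) := by
  classical
  obtain ⟨lam, hlam⟩ := (Algebra.linearMap K L).exists_leftInverse_of_injective (by
    rw [LinearMap.ker_eq_bot]; exact (algebraMap K L).injective)
  have hlam' : ∀ a : K, lam (algebraMap K L a) = a := fun a => by
    have := LinearMap.congr_fun hlam a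
    simpa using this
  rw [Algebra.adjoin_range_eq_range_aeval] at hx
  obtain ⟨F, hF⟩ := hx
  -- x is recovered by applying `lam` coefficientwise
  have hxval : AddMonoidAlgebra.ofCoeff (Finsupp.mapRange lam (map_zero lam) (baseMap (algebraMap K L) x).coeff) = x := by
    ext v
    rw [AddMonoidAlgebra.coeff_ofCoeff, Finsupp.mapRange_apply, baseMap_eq_mapRange, AddMonoidAlgebra.coeff_ofCoeff, Finsupp.mapRange_apply, hlam']
  set r : (Fin n →₀ ℕ) → AddMonoidAlgebra K (Fin (n+1) → ℤ) :=
    fun m => m.prod fun i e => (kurodaPi K n T β γ i) ^ e with hr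
  have hsum : aeval (kurodaPi L n T β γ) F
      = ∑ m ∈ F.support, (MvPolynomial.coeff m F) • baseMap (algebraMap K L) (r m) := by
    conv_lhs => rw [F.as_sum]
    rw [map_sum]
    refine Finset.sum_congr rfl fun m _ => ?_
    rw [MvPolynomial.aeval_monomial, Algebra.smul_def]
    congr 1
    rw [hr, map_finsuppProd]
    exact Finsupp.prod_congr fun i _ => by rw [map_pow, baseMap_kurodaPi]
  have hterm : ∀ (c : L) (y : AddMonoidAlgebra K (Fin (n+1) → ℤ)),
      AddMonoidAlgebra.ofCoeff (Finsupp.mapRange lam (map_zero lam) (c • baseMap (algebraMap K L) y).coeff)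
        = lam c • y := by
    intro c y
    ext v
    rw [AddMonoidAlgebra.coeff_ofCoeff, Finsupp.mapRange_apply]
    have h1 : (c • baseMap (algebraMap K L) y).coeff v = c * (baseMap (algebraMap K L) y).coeff v :=
      AddMonoidAlgebra.coeff_smul_apply ..
    rw [h1, baseMap_eq_mapRange, AddMonoidAlgebra.coeff_ofCoeff, Finsupp.mapRange_apply]
    have h2 : c * algebraMap K L (y.coeff v) = (y.coeff v) • c := by
      rw [Algebra.smul_def, mul_comm]
    rw [h2, map_smul]
    have h3 : (lam c • y).coeff v = lam c * y.coeff v := AddMonoidAlgebra.coeff_smul_apply ..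
    rw [h3, smul_eq_mul, mul_comm]
  have hF' : aeval (kurodaPi L n T β γ) F = baseMap (algebraMap K L) x := hF
  have hx2 : x = ∑ m ∈ F.support, lam (MvPolynomial.coeff m F) • r m := by
    rw [← hxval, ← hF', hsum, AddMonoidAlgebra.coeff_sum, Finsupp.mapRange_finset_sum lam, AddMonoidAlgebra.ofCoeff_sum]
    exact Finset.sum_congr rfl fun m _ => hterm _ _
  rw [hx2]
  refine sum_mem fun m _ => Subalgebra.smul_mem _ ?_ _
  rw [hr]
  refine prod_mem fun i _ => pow_mem (Algebra.subset_adjoin (Set.mem_range_self i)) _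

end Glue

end KurodaAux

/-- If `det T_{n-1} ≠ 0` then `K(π) ∩ K[X₁^±1, …, Xₙ^±1] = K[π]`:
a Laurent polynomial is a fraction of two elements of `K[π]` iff it lies in `K[π]`. -/
theorem stmt_7 (K : Type*) [Field K] (n : ℕ)
    (T : Matrix (Fin n) (Fin n) ℤ) (β γ : Fin n → ℤ)
    (hγ : ∀ i, 1 ≤ γ i)
    (hdiag : ∀ i, T i i ≤ -1)
    (hoff : ∀ i j, i ≠ j → 1 ≤ T i j)
    (hβ : ∀ i, 0 ≤ β i)
    (hdet : T.det ≠ 0) :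
    ∀ x : AddMonoidAlgebra K (Fin (n + 1) → ℤ),
      (∃ p q : Algebra.adjoin K (Set.range (kurodaPi K n T β γ)), q ≠ 0 ∧
          x * (q : AddMonoidAlgebra K (Fin (n + 1) → ℤ)) = p) ↔
        x ∈ Algebra.adjoin K (Set.range (kurodaPi K n T β γ)) := by
  intro x
  constructor
  · rintro ⟨⟨p, hp⟩, ⟨q, hq⟩, hq0, heq⟩
    have heq' : x * q = p := heq
    have hqne : q ≠ 0 := fun h => hq0 (Subtype.ext h)
    rw [Algebra.adjoin_range_eq_range_aeval] at hp hq
    obtain ⟨P, hP⟩ := hp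
    obtain ⟨Q, hQ⟩ := hq
    have hP' : MvPolynomial.aeval (kurodaPi K n T β γ) P = p := hP
    have hQ' : MvPolynomial.aeval (kurodaPi K n T β γ) Q = q := hQ
    let L := AlgebraicClosure K
    have hQL : MvPolynomial.aeval (kurodaPi L n T β γ)
        (MvPolynomial.map (algebraMap K L) Q) ≠ 0 := by
      rw [← KurodaAux.baseMap_aeval, hQ']
      intro h
      exact hqne (KurodaAux.baseMap_injective _ (algebraMap K L).injective
        (by rw [h, map_zero]))
    have heqL : KurodaAux.baseMap (algebraMap K L) x *
        MvPolynomial.aeval (kurodaPi L n T β γ) (MvPolynomial.map (algebraMap K L) Q)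
        = MvPolynomial.aeval (kurodaPi L n T β γ) (MvPolynomial.map (algebraMap K L) P) := by
      rw [← KurodaAux.baseMap_aeval, ← KurodaAux.baseMap_aeval, hQ', hP', ← map_mul, heq']
    have hxL := KurodaAux.main_aux hγ hdet (MvPolynomial.map (algebraMap K L) Q)
      (KurodaAux.baseMap (algebraMap K L) x) (MvPolynomial.map (algebraMap K L) P) hQL heqL
    exact KurodaAux.descent x hxL
  · intro hx
    refine ⟨⟨x, hx⟩, 1, ?_, by simp⟩
    intro h
    have := congrArg (Subtype.val) h
    simp at this
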